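/- Fix p with 0 < p < 1 and define ς(φ) = 1 − p·[4(2p − 1)·sin²(φ/2)·(cos φ − 1) + 2·sin²φ]. If φ satisfies sin φ < 0 and cos φ > 1 − 1/(2p), then ς′(φ) > 0, i.e., ς is strictly increasing at φ. -/

import Mathlib

open Real

theorem stmt_9 (p φ : ℝ) (hp0 : 0 < p) (hp1 : p < 1)
    (hsin : Real.sin φ < 0) (hcos : Real.cos φ > 1 - 1 / (2 * p)) :
    deriv (fun φ : ℝ => 1 - p *
        (4 * (2 * p - 1) * Real.sin (φ / 2) ^ 2 * (Real.cos φ - 1) + 2 * Real.sin φ ^ 2)) φ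
      > 0 := by
  have h1 : HasDerivAt (fun x : ℝ => x / 2) (1 / 2) φ := by
    simpa using (hasDerivAt_id φ).div_const 2
  have hs2 : HasDerivAt (fun x : ℝ => Real.sin (x / 2)) (Real.cos (φ / 2) * (1 / 2)) φ :=
    by have := (Real.hasDerivAt_sin (φ / 2)).comp φ h1; exact this
  have hs2sq : HasDerivAt (fun x : ℝ => Real.sin (x / 2) ^ 2)
      (2 * Real.sin (φ / 2) ^ 1 * (Real.cos (φ / 2) * (1 / 2))) φ := hs2.pow 2
  have hc : HasDerivAt (fun x : ℝ => Real.cos x - 1) (-Real.sin φ) φ := by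
    simpa using (Real.hasDerivAt_cos φ).sub_const 1
  have hssq : HasDerivAt (fun x : ℝ => Real.sin x ^ 2)
      (2 * Real.sin φ ^ 1 * Real.cos φ) φ := (Real.hasDerivAt_sin φ).pow 2
  have hg : HasDerivAt (fun x : ℝ =>
      4 * (2 * p - 1) * Real.sin (x / 2) ^ 2 * (Real.cos x - 1) + 2 * Real.sin x ^ 2)
      ((4 * (2 * p - 1) * (2 * Real.sin (φ / 2) ^ 1 * (Real.cos (φ / 2) * (1 / 2)))) *
        (Real.cos φ - 1) + (4 * (2 * p - 1) * Real.sin (φ / 2) ^ 2) * (-Real.sin φ)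
        + 2 * (2 * Real.sin φ ^ 1 * Real.cos φ)) φ :=
    ((hs2sq.const_mul (4 * (2 * p - 1))).mul hc).add (hssq.const_mul 2)
  have hf : HasDerivAt (fun x : ℝ => 1 - p *
      (4 * (2 * p - 1) * Real.sin (x / 2) ^ 2 * (Real.cos x - 1) + 2 * Real.sin x ^ 2))
      (-(p * ((4 * (2 * p - 1) * (2 * Real.sin (φ / 2) ^ 1 * (Real.cos (φ / 2) * (1 / 2)))) *
        (Real.cos φ - 1) + (4 * (2 * p - 1) * Real.sin (φ / 2) ^ 2) * (-Real.sin φ)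
        + 2 * (2 * Real.sin φ ^ 1 * Real.cos φ)))) φ :=
    (hg.const_mul p).const_sub 1
  rw [hf.deriv]
  have hhalf : Real.sin (φ / 2) ^ 2 = (1 - Real.cos φ) / 2 := by
    have h1 := Real.cos_two_mul (φ / 2)
    have h2 := Real.sin_sq_add_cos_sq (φ / 2)
    rw [show 2 * (φ / 2) = φ by ring] at h1
    linarith
  have hdouble : Real.sin φ = 2 * Real.sin (φ / 2) * Real.cos (φ / 2) := by
    have := Real.sin_two_mul (φ / 2)
    rw [show 2 * (φ / 2) = φ by ring] at this
    linarith
  have hkey : 2 * p * Real.cos φ - 2 * p + 1 > 0 := by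
    have h2p : (0:ℝ) < 2 * p := by linarith
    have := (lt_div_iff₀ h2p).mp (by linarith [hcos] : 1 - Real.cos φ < 1 / (2 * p))
    nlinarith
  have hD : -(p * ((4 * (2 * p - 1) * (2 * Real.sin (φ / 2) ^ 1 * (Real.cos (φ / 2) * (1 / 2)))) *
        (Real.cos φ - 1) + (4 * (2 * p - 1) * Real.sin (φ / 2) ^ 2) * (-Real.sin φ)
        + 2 * (2 * Real.sin φ ^ 1 * Real.cos φ)))
      = -4 * p * Real.sin φ * (2 * p * Real.cos φ - 2 * p + 1) := by
    rw [hhalf, hdouble]; ring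
  rw [hD]
  nlinarith [mul_pos (mul_pos hp0 (neg_pos.mpr hsin)) hkey]
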